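/- Let (X,T) be a non-periodic linearly recurrent minimal subshift with constant K, and let (Y,T) be a non-periodic subshift factor of (X,T). Then (Y,T) is linearly recurrent, and there exists n₁ such that for every u ∈ L(Y) with |u| ≥ n₁: (1) every return word w ∈ R_u(Y) satisfies |u|/(2K) ≤ |w| ≤ 2K|u|; (2) #R_u(Y) ≤ 2K(2K+1)². -/

import Mathlib

/-- The factor `x_{[i, i+n)}` of a sequence. -/
def factorAt {A : Type*} (x : ℕ → A) (i n : ℕ) : List A := (List.range n).map fun k => x (i + k)

/-- `i` is an occurrence of the word `u` in the sequence `x`. -/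
def OccursAt {A : Type*} (x : ℕ → A) (u : List A) (i : ℕ) : Prop := factorAt x i u.length = u

/-- `u` is a factor of `x`. -/
def IsFactor {A : Type*} (x : ℕ → A) (u : List A) : Prop := ∃ i, OccursAt x u i

/-- `u` occurs in `x` with bounded gaps (its set of occurrences is syndetic). -/
def BoundedGaps {A : Type*} (x : ℕ → A) (u : List A) : Prop :=
  ∃ g, 0 < g ∧ ∀ i, ∃ j, i ≤ j ∧ j < i + g ∧ OccursAt x u j

/-- `x` is uniformly recurrent: every factor occurs with bounded gaps. -/
def UniformlyRecurrent {A : Type*} (x : ℕ → A) : Prop :=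
  ∀ u, IsFactor x u → BoundedGaps x u

/-- `w` is a return word to `u` in `x`: `w = x_{[j,k)}` for consecutive
occurrences `j < k` of `u` in `x`. -/
def IsReturnWord {A : Type*} (x : ℕ → A) (u w : List A) : Prop :=
  ∃ j k, j < k ∧ OccursAt x u j ∧ OccursAt x u k ∧
    (∀ m, j < m → m < k → ¬ OccursAt x u m) ∧ w = factorAt x j (k - j)

/-- `x` is linearly recurrent with constant `K`: it is uniformly recurrent and every
return word `w` to every nonempty factor `u` satisfies `|w| ≤ K|u|`. -/
def LinearlyRecurrent {A : Type*} (x : ℕ → A) (K : ℕ) : Prop :=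
  UniformlyRecurrent x ∧ ∀ u w, u ≠ [] → IsReturnWord x u w → w.length ≤ K * u.length

/-- `x` is ultimately periodic. -/
def UltimatelyPeriodic {A : Type*} (x : ℕ → A) : Prop :=
  ∃ N t, 0 < t ∧ ∀ n, N ≤ n → x (n + t) = x n
/-- The shift transformation on one-sided sequences. -/
def shift {A : Type*} (x : ℕ → A) : ℕ → A := fun n => x (n + 1)

/-- The language of (the elements of) a subshift. -/
def LangOf {A : Type*} (X : Set (ℕ → A)) : Set (List A) := { w | ∃ x ∈ X, IsFactor x w }

/-- The set of return words to `u` in the subshift `X`. -/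
def ReturnWordsOf {A : Type*} (X : Set (ℕ → A)) (u : List A) : Set (List A) :=
  { w | ∃ x ∈ X, IsReturnWord x u w }
section TopoDefs

variable {A : Type*} [TopologicalSpace A] {B : Type*} [TopologicalSpace B]

/-- A subshift: a closed, shift-invariant set of sequences. -/
def IsSubshift (X : Set (ℕ → A)) : Prop := IsClosed X ∧ ∀ x ∈ X, shift x ∈ X

/-- A minimal subshift: the only closed shift-invariant subsets are `∅` and `X`. -/
def IsMinimalSubshift (X : Set (ℕ → A)) : Prop :=
  IsSubshift X ∧ X.Nonempty ∧
  ∀ Y ⊆ X, IsClosed Y → (∀ y ∈ Y, shift y ∈ Y) → Y = ∅ ∨ Y = X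

/-- `φ` is a factor map from the subshift `X` onto the subshift `Y`:
continuous on `X`, onto `Y`, commuting with the shift. -/
def IsFactorMapOn (φ : (ℕ → A) → (ℕ → B)) (X : Set (ℕ → A)) (Y : Set (ℕ → B)) : Prop :=
  ContinuousOn φ X ∧ φ '' X = Y ∧ ∀ x ∈ X, φ (shift x) = shift (φ x)

/-- The subshifts `X` and `Y` are isomorphic: there is a bijective factor map. -/
def SubshiftIsomorphic (X : Set (ℕ → A)) (Y : Set (ℕ → B)) : Prop :=
  ∃ φ : (ℕ → A) → (ℕ → B), IsFactorMapOn φ X Y ∧ Set.InjOn φ X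

end TopoDefs

namespace LRAux
variable {A : Type*} {B : Type*}

@[simp] lemma factorAt_length (x : ℕ → A) (i n : ℕ) : (factorAt x i n).length = n := by
  simp [factorAt]

lemma factorAt_eq_iff {x z : ℕ → A} {i j n : ℕ} :
    factorAt x i n = factorAt z j n ↔ ∀ t, t < n → x (i + t) = z (j + t) := by
  unfold factorAt
  rw [List.map_inj_left]
  constructor
  · intro h t ht; exact h t (List.mem_range.2 ht)
  · intro h t ht; exact h t (List.mem_range.1 ht)

lemma occursAt_iff_factorAt {x : ℕ → A} {u : List A} {i : ℕ} :
    OccursAt x u i ↔ factorAt x i u.length = u := Iff.rfl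

lemma occursAt_self (x : ℕ → A) (i n : ℕ) : OccursAt x (factorAt x i n) i := by
  rw [occursAt_iff_factorAt, factorAt_length]

lemma occursAt_factorAt_iff {x : ℕ → A} {i j n : ℕ} :
    OccursAt x (factorAt x j n) i ↔ ∀ t, t < n → x (i + t) = x (j + t) := by
  rw [occursAt_iff_factorAt, factorAt_length, factorAt_eq_iff]

lemma isFactor_factorAt (x : ℕ → A) (i n : ℕ) : IsFactor x (factorAt x i n) :=
  ⟨i, occursAt_self x i n⟩

lemma factorAt_add (x : ℕ → A) (i a b : ℕ) :
    factorAt x i (a + b) = factorAt x i a ++ factorAt x (i + a) b := by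
  unfold factorAt
  rw [List.range_add, List.map_append, List.map_map]
  congr 1
  apply List.map_congr_left
  intro t _
  simp only [Function.comp_apply]
  congr 1
  omega

lemma factorAt_ne_nil (x : ℕ → A) (i n : ℕ) (hn : 0 < n) : factorAt x i n ≠ [] := by
  intro h
  have := factorAt_length x i n
  rw [h] at this
  simp at this
  omega

lemma shift_iterate_apply (x : ℕ → A) (s t : ℕ) : (shift^[s] x) t = x (t + s) := by
  induction s generalizing x t with
  | zero => simp
  | succ s ih =>
    rw [Function.iterate_succ_apply, ih (shift x) t]
    show x (t + s + 1) = x (t + (s + 1))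
    congr 1

lemma next_occ {x : ℕ → A} {v : List A} {j : ℕ}
    (hub : ∀ a, ∃ i, a ≤ i ∧ OccursAt x v i) :
    ∃ k, j < k ∧ OccursAt x v k ∧ ∀ m, j < m → m < k → ¬ OccursAt x v m := by
  have hne : {m | j < m ∧ OccursAt x v m}.Nonempty := by
    obtain ⟨i, hi, ho⟩ := hub (j + 1)
    exact ⟨i, by omega, ho⟩
  have hmem := Nat.sInf_mem hne
  refine ⟨sInf {m | j < m ∧ OccursAt x v m}, hmem.1, hmem.2, fun m hm1 hm2 ho => ?_⟩
  exact (Nat.notMem_of_lt_sInf hm2) ⟨hm1, ho⟩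

structure Ctx (A : Type*) (B : Type*) (Y : Set (ℕ → B)) (K : ℕ) where
  x : ℕ → A
  y : ℕ → B
  r : ℕ
  hr : 1 ≤ r
  hUR : UniformlyRecurrent x
  hRB : ∀ u w, u ≠ [] → IsReturnWord x u w → w.length ≤ K * u.length
  determ : ∀ i i' n, (∀ t, t < n + r → x (i + t) = x (i' + t)) →
    ∀ t, t < n → y (i + t) = y (i' + t)
  hyY : y ∈ Y
  approx : ∀ z ∈ Y, ∀ i m N, ∃ i', N ≤ i' ∧ ∀ t, t < m → z (i + t) = y (i' + t)
  hYnf : ¬ Y.Finite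

namespace Ctx

variable {Y : Set (ℕ → B)} {K : ℕ} (c : Ctx A B Y K)

lemma x_unbounded {v : List A} (hv : IsFactor c.x v) :
    ∀ a, ∃ i, a ≤ i ∧ OccursAt c.x v i := by
  intro a
  obtain ⟨g, _, hocc⟩ := c.hUR v hv
  obtain ⟨j, hj1, _, hj3⟩ := hocc a
  exact ⟨j, hj1, hj3⟩

lemma x_gap {v : List A} (hv : v ≠ []) {j k : ℕ}
    (hj : OccursAt c.x v j) (hk : OccursAt c.x v k) (hjk : j < k)
    (hmid : ∀ m, j < m → m < k → ¬ OccursAt c.x v m) :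
    k - j ≤ K * v.length := by
  have := c.hRB v (factorAt c.x j (k - j)) hv ⟨j, k, hjk, hj, hk, hmid, rfl⟩
  rwa [factorAt_length] at this

lemma K_pos (c : Ctx A B Y K) : 1 ≤ K := by
  have h0 : OccursAt c.x (factorAt c.x 0 1) 0 := occursAt_self _ _ _
  obtain ⟨k, hk1, hk2, hk3⟩ := next_occ (c.x_unbounded (isFactor_factorAt _ 0 1)) (j := 0)
  have := c.x_gap (factorAt_ne_nil _ _ _ (by omega)) h0 hk2 hk1 hk3
  rw [factorAt_length] at this
  omega

lemma firstN [Finite A] (L : ℕ) :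
    ∃ N, ∀ v : List A, v.length ≤ L → IsFactor c.x v → ∃ i, i ≤ N ∧ OccursAt c.x v i := by
  classical
  set S := {v : List A | v.length ≤ L ∧ IsFactor c.x v} with hS
  have hSfin : S.Finite := (List.finite_length_le A L).subset (fun v hv => hv.1)
  set o : List A → ℕ := fun v => sInf {i | OccursAt c.x v i} with ho
  obtain ⟨N, hN⟩ := (hSfin.image o).bddAbove
  refine ⟨N, fun v hv1 hv2 => ?_⟩
  have hmem : o v ∈ {i | OccursAt c.x v i} := Nat.sInf_mem hv2
  exact ⟨o v, hN (Set.mem_image_of_mem o ⟨hv1, hv2⟩), hmem⟩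

lemma straddle [Finite A] (L : ℕ) :
    ∃ N, ∀ v : List A, v ≠ [] → v.length ≤ L → IsFactor c.x v → ∀ a, N ≤ a →
      ∃ i, a ≤ i ∧ i ≤ a + K * v.length ∧ OccursAt c.x v i := by
  classical
  obtain ⟨N, hN⟩ := c.firstN L
  refine ⟨N, fun v hv hvL hvf a ha => ?_⟩
  obtain ⟨i₀, hi₀N, hi₀⟩ := hN v hvL hvf
  set j0 := Nat.findGreatest (fun m => OccursAt c.x v m) a with hj0
  have hj0occ : OccursAt c.x v j0 := Nat.findGreatest_spec (le_trans hi₀N ha) hi₀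
  have hj0le : j0 ≤ a := Nat.findGreatest_le a
  obtain ⟨k, hk1, hk2, hk3⟩ := next_occ (c.x_unbounded hvf) (j := j0)
  have hgap := c.x_gap hv hj0occ hk2 hk1 hk3
  have hak : a < k := by
    by_contra h
    push_neg at h
    exact Nat.findGreatest_is_greatest hk1 h hk2
  exact ⟨k, by omega, by omega, hk2⟩

lemma ygap [Finite A] (L : ℕ) :
    ∃ N, ∀ m i₀ a, m ≤ L → N ≤ a →
      ∃ i, a ≤ i ∧ i ≤ a + K * (m + c.r) ∧ factorAt c.y i m = factorAt c.y i₀ m := by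
  obtain ⟨N, hN⟩ := c.straddle (L + c.r)
  refine ⟨N, fun m i₀ a hm ha => ?_⟩
  obtain ⟨i, hi1, hi2, hi3⟩ := hN (factorAt c.x i₀ (m + c.r))
    (factorAt_ne_nil _ _ _ (by have := c.hr; omega))
    (by rw [factorAt_length]; omega) (isFactor_factorAt _ _ _) a ha
  rw [factorAt_length] at hi2
  rw [occursAt_factorAt_iff] at hi3
  exact ⟨i, hi1, hi2, factorAt_eq_iff.2 (c.determ i i₀ m hi3)⟩

lemma y_boundedGaps [Finite A] {u : List B} (hu : IsFactor c.y u) : BoundedGaps c.y u := by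
  obtain ⟨i₀, hi₀⟩ := hu
  set n := u.length with hn
  obtain ⟨N, hN⟩ := c.ygap n
  refine ⟨N + K * (n + c.r) + 1, by omega, fun i => ?_⟩
  obtain ⟨j, hj1, hj2, hj3⟩ := hN n i₀ (max i N) le_rfl (le_max_right _ _)
  have hocc : OccursAt c.y u j := by
    rw [occursAt_iff_factorAt, ← hn]
    rw [occursAt_iff_factorAt, ← hn] at hi₀
    rw [hj3, hi₀]
  have h1 : max i N ≤ i + N := by omega
  exact ⟨j, le_trans (le_max_left i N) hj1, by omega, hocc⟩

lemma y_unbounded [Finite A] {u : List B} (hu : IsFactor c.y u) :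
    ∀ a, ∃ i, a ≤ i ∧ OccursAt c.y u i := by
  intro a
  obtain ⟨g, _, hocc⟩ := c.y_boundedGaps hu
  obtain ⟨j, hj1, _, hj3⟩ := hocc a
  exact ⟨j, hj1, hj3⟩

lemma ub [Finite A] {u : List B} {j k : ℕ} (hru : c.r ≤ u.length)
    (hj : OccursAt c.y u j) (hk : OccursAt c.y u k) (hjk : j < k)
    (hmid : ∀ m, j < m → m < k → ¬ OccursAt c.y u m) :
    k - j ≤ 2 * K * u.length := by
  set n := u.length with hn
  obtain ⟨k', h1, h2, h3⟩ := next_occ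
    (c.x_unbounded (isFactor_factorAt c.x j (n + c.r))) (j := j)
  have hgap := c.x_gap (factorAt_ne_nil _ _ _ (by have := c.hr; omega))
    (occursAt_self _ _ _) h2 h1 h3
  rw [factorAt_length] at hgap
  rw [occursAt_factorAt_iff] at h2
  have hdet := c.determ k' j n h2
  have hocc' : OccursAt c.y u k' := by
    rw [occursAt_iff_factorAt, ← hn, ← hj]
    exact factorAt_eq_iff.2 hdet
  have hkk' : k ≤ k' := by
    by_contra h
    push_neg at h
    exact hmid k' h1 h hocc'
  have hmono : K * (n + c.r) ≤ K * (n + n) := Nat.mul_le_mul_left _ (by omega)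
  have h2n : K * (n + n) = 2 * K * n := by ring
  omega

lemma periodic_contra {p : ℕ} (hp : 0 < p) (hper : ∀ t, c.y (t + p) = c.y t) : False := by
  have hq : ∀ q t, c.y (t + q * p) = c.y t := by
    intro q
    induction q with
    | zero => simp
    | succ q ih =>
      intro t
      have he : t + (q + 1) * p = (t + q * p) + p := by ring
      rw [he, hper, ih]
  apply c.hYnf
  set O := (fun s => (fun nn => c.y (nn + s))) '' (Set.Iio p) with hO
  have hOfin : O.Finite := (Set.finite_Iio p).image _
  refine hOfin.subset ?_
  intro z hz
  by_contra hzO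
  have hd : ∀ s : Fin p, ∃ dd, z dd ≠ c.y (dd + s.1) := by
    intro s
    by_contra h
    push_neg at h
    exact hzO ⟨s.1, s.2, by funext nn; exact (h nn).symm⟩
  choose d hd using hd
  have hpp : 0 < p := hp
  set l := (Finset.univ.sup d) + 1 with hl
  obtain ⟨i', _, hag⟩ := c.approx z hz 0 l 0
  set s : Fin p := ⟨i' % p, Nat.mod_lt _ hp⟩ with hs
  have hzy : ∀ t, t < l → z t = c.y (t + s.1) := by
    intro t ht
    have h1 := hag t ht
    rw [zero_add] at h1
    rw [h1]
    have he : i' + t = (t + i' % p) + (i' / p) * p := by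
      conv_lhs => rw [← Nat.mod_add_div i' p]
      ring
    rw [he, hq]
  have hdl : d s < l := by
    have := Finset.le_sup (f := d) (Finset.mem_univ s)
    omega
  exact hd s (hzy (d s) hdl)

lemma lb [Finite A] (P : ℕ) :
    ∃ N, ∀ (u : List B) (j k : ℕ),
      N ≤ j → j < k → k - j ≤ P → K * (2 * c.r + 1) + 1 ≤ u.length →
      OccursAt c.y u j → OccursAt c.y u k → u.length ≤ 2 * K * (k - j) := by
  obtain ⟨N, hN⟩ := c.ygap (P + 1)
  refine ⟨N, fun u j k hNj hjk hkP hnbig hj hk => ?_⟩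
  set n := u.length with hn
  set p := k - j with hp'
  have hkjp : k = j + p := by omega
  have hp : 0 < p := by omega
  have hw : ∀ t, j ≤ t → t < j + n → c.y (t + p) = c.y t := by
    intro t ht1 ht2
    have hjn : factorAt c.y j n = factorAt c.y k n := by
      rw [occursAt_iff_factorAt, ← hn] at hj hk
      rw [hj, hk]
    have hag := factorAt_eq_iff.1 hjn (t - j) (by omega)
    have e1 : j + (t - j) = t := by omega
    have e2 : k + (t - j) = t + p := by omega
    rw [e1, e2] at hag
    exact hag.symm
  by_cases hcase : K * (p + c.r + 1) + 1 ≤ n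
  · exfalso
    apply c.periodic_contra hp
    intro t
    obtain ⟨i, hi1, hi2, hi3⟩ := hN (p + 1) t j (by omega) hNj
    have hag := factorAt_eq_iff.1 hi3
    have h0 := hag 0 (by omega)
    have hpp := hag p (by omega)
    have heq : K * (p + 1 + c.r) = K * (p + c.r + 1) := by ring
    have hiw : c.y (i + p) = c.y i := hw i hi1 (by omega)
    rw [add_zero, add_zero] at h0
    calc c.y (t + p) = c.y (i + p) := hpp.symm
      _ = c.y i := hiw
      _ = c.y t := h0
  · push_neg at hcase
    have hpr : c.r + 1 ≤ p := by
      by_contra h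
      push_neg at h
      have : K * (p + c.r + 1) ≤ K * (2 * c.r + 1) := Nat.mul_le_mul_left _ (by omega)
      omega
    have h1 : K * (p + c.r + 1) = K * p + K * (c.r + 1) := by ring
    have h2 : K * (c.r + 1) ≤ K * p := Nat.mul_le_mul_left _ hpr
    have h3 : 2 * K * p = K * p + K * p := by ring
    omega


lemma lang_iff {u : List B} : u ∈ LangOf Y ↔ IsFactor c.y u := by
  constructor
  · rintro ⟨z, hz, i, hi⟩
    obtain ⟨i', _, hag⟩ := c.approx z hz i u.length 0
    refine ⟨i', ?_⟩
    rw [occursAt_iff_factorAt]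
    rw [occursAt_iff_factorAt] at hi
    rw [← factorAt_eq_iff.2 hag]
    exact hi
  · exact fun h => ⟨c.y, c.hyY, h⟩

/-- transfer of a return word of `Y` to a canonical consecutive pair in `y`,
with base point at least `N`. -/
lemma rw_transfer {u w : List B} (hw : w ∈ ReturnWordsOf Y u) (N : ℕ) :
    ∃ j p, N ≤ j ∧ 0 < p ∧ p = w.length ∧ OccursAt c.y u j ∧ OccursAt c.y u (j + p) ∧
      (∀ t, 0 < t → t < p → ¬ OccursAt c.y u (j + t)) ∧ w = factorAt c.y j p := by
  obtain ⟨z, hz, j₀, k₀, hjk, hj₀, hk₀, hmid, hwdef⟩ := hw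
  set n := u.length with hn
  set p := k₀ - j₀ with hp
  have hk₀' : k₀ = j₀ + p := by omega
  obtain ⟨i', hi'N, hag⟩ := c.approx z hz j₀ (p + n) N
  have hagf : ∀ a b, a + b ≤ p + n → factorAt z (j₀ + a) b = factorAt c.y (i' + a) b := by
    intro a b hab
    apply factorAt_eq_iff.2
    intro t ht
    have h1 := hag (a + t) (by omega)
    rw [← add_assoc, ← add_assoc] at h1
    exact h1
  have hwlen : p = w.length := by rw [hwdef, factorAt_length]
  have hoccj : OccursAt c.y u i' := by
    rw [occursAt_iff_factorAt, ← hn]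
    have := hagf 0 n (by omega)
    rw [add_zero, add_zero] at this
    rw [← this]
    exact hj₀
  have hocck : OccursAt c.y u (i' + p) := by
    rw [occursAt_iff_factorAt, ← hn]
    have := hagf p n (le_refl _)
    rw [← this, ← hk₀']
    exact hk₀
  refine ⟨i', p, hi'N, by omega, hwlen, hoccj, hocck, ?_, ?_⟩
  · intro t ht1 ht2 hocc
    apply hmid (j₀ + t) (by omega) (by omega)
    rw [occursAt_iff_factorAt, ← hn]
    rw [occursAt_iff_factorAt, ← hn] at hocc
    rw [hagf t n (by omega)]
    exact hocc
  · rw [hwdef]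
    have := hagf 0 p (by omega)
    rw [add_zero, add_zero] at this
    exact this

lemma exists_LR [Finite A] [Finite B] : ∃ K', LinearlyRecurrent c.y K' := by
  classical
  have hURy : UniformlyRecurrent c.y := fun u hu => c.y_boundedGaps hu
  set T := {u : List B | u.length ≤ c.r ∧ IsFactor c.y u} with hT
  have hTfin : T.Finite := (List.finite_length_le B c.r).subset fun v hv => hv.1
  set G : List B → ℕ := fun u => sInf {g | ∀ w, IsReturnWord c.y u w → w.length ≤ g} with hG
  have hGspec : ∀ u ∈ T, ∀ w, IsReturnWord c.y u w → w.length ≤ G u := by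
    intro u hu
    have hne : {g | ∀ w, IsReturnWord c.y u w → w.length ≤ g}.Nonempty := by
      obtain ⟨g, hg0, hgap⟩ := c.y_boundedGaps hu.2
      refine ⟨g, fun w hw => ?_⟩
      obtain ⟨j, k, hjk, hj, hk, hmid, hwd⟩ := hw
      obtain ⟨m, hm1, hm2, hm3⟩ := hgap (j + 1)
      have hkm : k ≤ m := by
        by_contra h
        push_neg at h
        exact hmid m (by omega) h hm3
      rw [hwd, factorAt_length]
      omega
    exact Nat.sInf_mem hne
  obtain ⟨M, hM⟩ := (hTfin.image G).bddAbove
  refine ⟨max (2 * K) M, hURy, fun u w hu hrw => ?_⟩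
  have hulen : 1 ≤ u.length := List.length_pos_iff.2 hu
  by_cases hcase : c.r ≤ u.length
  · obtain ⟨j, k, hjk, hj, hk, hmid, hwd⟩ := hrw
    have hub := c.ub hcase hj hk hjk hmid
    rw [hwd, factorAt_length]
    calc k - j ≤ 2 * K * u.length := hub
      _ ≤ max (2 * K) M * u.length := Nat.mul_le_mul_right _ (le_max_left _ _)
  · have huT : u ∈ T := by
      refine ⟨by omega, ?_⟩
      obtain ⟨j, k, hjk, hj, _⟩ := hrw
      exact ⟨j, hj⟩
    have h1 : w.length ≤ G u := hGspec u huT w hrw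
    have h2 : G u ≤ M := hM (Set.mem_image_of_mem G huT)
    calc w.length ≤ max (2 * K) M := by
          have := le_max_right (2 * K) M
          omega
      _ ≤ max (2 * K) M * u.length := Nat.le_mul_of_pos_right _ (by omega)


lemma main_bounds [Finite A] [Finite B] (c : Ctx A B Y K) :
    ∃ n₁ : ℕ, ∀ u ∈ LangOf Y, n₁ ≤ u.length →
      (∀ w ∈ ReturnWordsOf Y u,
        u.length ≤ 2 * K * w.length ∧ w.length ≤ 2 * K * u.length) ∧
      (ReturnWordsOf Y u).Finite ∧
      (ReturnWordsOf Y u).ncard ≤ 2 * K * (2 * K + 1) ^ 2 := by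
  classical
  have hK := c.K_pos
  have hr := c.hr
  refine ⟨K * (2 * c.r + 1) + 1 + c.r, fun u hu hn => ?_⟩
  set n := u.length with hnu
  have hn1 : 1 ≤ n := by omega
  have hrn : c.r ≤ n := by omega
  have hbig : K * (2 * c.r + 1) + 1 ≤ n := by omega
  set D := (2 * K + 1) ^ 2 * n with hD
  obtain ⟨N7, h7⟩ := c.ygap ((2 * K + 1) * n)
  obtain ⟨N11, h11⟩ := c.lb D
  set N := max N7 N11 with hN
  have hufac : IsFactor c.y u := c.lang_iff.1 hu
  -- bounds for transferred pairs
  have hpair : ∀ w ∈ ReturnWordsOf Y u,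
      ∃ j p, N ≤ j ∧ 0 < p ∧ p = w.length ∧ OccursAt c.y u j ∧ OccursAt c.y u (j + p) ∧
      (∀ t, 0 < t → t < p → ¬ OccursAt c.y u (j + t)) ∧ w = factorAt c.y j p ∧
      n ≤ 2 * K * p ∧ p ≤ 2 * K * n := by
    intro w hw
    obtain ⟨j, p, hjN, hp0, hpw, hocc1, hocc2, hmidt, hwfac⟩ := c.rw_transfer hw N
    have hmid' : ∀ m, j < m → m < j + p → ¬ OccursAt c.y u m := by
      intro m hm1 hm2 hocc
      exact hmidt (m - j) (by omega) (by omega) (by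
        have e : j + (m - j) = m := by omega
        rwa [e])
    have hub : p ≤ 2 * K * n := by
      have := c.ub hrn hocc1 hocc2 (by omega) hmid'
      have e : j + p - j = p := by omega
      rwa [e] at this
    have h2KD : 2 * K * n ≤ D := by
      have h1 : 2 * K ≤ (2 * K + 1) ^ 2 := by nlinarith
      calc 2 * K * n ≤ (2 * K + 1) ^ 2 * n := Nat.mul_le_mul_right _ h1
        _ = D := rfl
    have hlb : n ≤ 2 * K * p := by
      have := h11 u j (j + p) (le_trans (le_max_right _ _) hjN) (by omega)
        (by omega) hbig hocc1 hocc2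
      have e : j + p - j = p := by omega
      rwa [e] at this
    exact ⟨j, p, hjN, hp0, hpw, hocc1, hocc2, hmidt, hwfac, hlb, hub⟩
  constructor
  · intro w hw
    obtain ⟨j, p, _, _, hpw, _, _, _, _, hlb, hub⟩ := hpair w hw
    rw [← hpw]
    exact ⟨hlb, hub⟩
  -- counting
  set S := {i : ℕ | N ≤ i ∧ i + n ≤ N + D ∧ OccursAt c.y u i} with hS
  have hSfin : S.Finite := (Set.finite_Ico N (N + D)).subset
    (fun i hi => ⟨hi.1, by have := hi.2.1; omega⟩)
  have hspace : ∀ i₁ ∈ S, ∀ i₂ ∈ S, i₁ < i₂ → n ≤ 2 * K * (i₂ - i₁) := by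
    intro i₁ hi₁ i₂ hi₂ hlt
    obtain ⟨k', hk1, hk2, hk3⟩ := next_occ (c.y_unbounded hufac) (j := i₁)
    have hki : k' ≤ i₂ := by
      by_contra h
      push_neg at h
      exact hk3 i₂ hlt h hi₂.2.2
    have := h11 u i₁ k' (le_trans (le_max_right _ _) hi₁.1) hk1
      (by have := hi₂.2.1; have := hi₁.1; omega) hbig hi₁.2.2 hk2
    calc n ≤ 2 * K * (k' - i₁) := this
      _ ≤ 2 * K * (i₂ - i₁) := Nat.mul_le_mul_left _ (by omega)
  set g : ℕ → ℕ := fun i => 2 * K * (i - N) / n with hg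
  have hginj : Set.InjOn g S := by
    intro i₁ hi₁ i₂ hi₂ heq
    rcases lt_trichotomy i₁ i₂ with h | h | h
    · exfalso
      have hsp := hspace i₁ hi₁ i₂ hi₂ h
      have e1 : i₂ - N = (i₁ - N) + (i₂ - i₁) := by
        have := hi₁.1
        omega
      have e2 : 2 * K * (i₂ - N) = 2 * K * (i₁ - N) + 2 * K * (i₂ - i₁) := by
        rw [e1, Nat.mul_add]
      have hdiv : (2 * K * (i₁ - N) + n) / n ≤ (2 * K * (i₁ - N) + 2 * K * (i₂ - i₁)) / n :=
        Nat.div_le_div_right (by omega)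
      rw [Nat.add_div_right _ (by omega : 0 < n)] at hdiv
      have : g i₁ + 1 ≤ g i₂ := by
        show 2 * K * (i₁ - N) / n + 1 ≤ 2 * K * (i₂ - N) / n
        rw [e2]
        exact hdiv
      omega
    · exact h
    · exfalso
      have hsp := hspace i₂ hi₂ i₁ hi₁ h
      have e1 : i₁ - N = (i₂ - N) + (i₁ - i₂) := by
        have := hi₂.1
        omega
      have e2 : 2 * K * (i₁ - N) = 2 * K * (i₂ - N) + 2 * K * (i₁ - i₂) := by
        rw [e1, Nat.mul_add]
      have hdiv : (2 * K * (i₂ - N) + n) / n ≤ (2 * K * (i₂ - N) + 2 * K * (i₁ - i₂)) / n :=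
        Nat.div_le_div_right (by omega)
      rw [Nat.add_div_right _ (by omega : 0 < n)] at hdiv
      have : g i₂ + 1 ≤ g i₁ := by
        show 2 * K * (i₂ - N) / n + 1 ≤ 2 * K * (i₁ - N) / n
        rw [e2]
        exact hdiv
      omega
  set M' := 2 * K * ((2 * K + 1) ^ 2 - 1) with hM'
  have himg : ∀ i ∈ S, g i ≤ M' := by
    intro i hi
    have h1 : i - N ≤ D - n := by
      have := hi.2.1
      have := hi.1
      omega
    have e : D - n = ((2 * K + 1) ^ 2 - 1) * n := by
      rw [hD, Nat.sub_mul, one_mul]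
    have h2 : 2 * K * (i - N) ≤ 2 * K * (((2 * K + 1) ^ 2 - 1) * n) :=
      Nat.mul_le_mul_left _ (by rw [← e]; exact h1)
    have h3 : 2 * K * (((2 * K + 1) ^ 2 - 1) * n) = M' * n := by rw [hM']; ring
    calc g i = 2 * K * (i - N) / n := rfl
      _ ≤ (M' * n) / n := Nat.div_le_div_right (by omega)
      _ = M' := Nat.mul_div_cancel _ (by omega)
  set f : List B → ℕ := fun w =>
    sInf {i | N ≤ i ∧ i + (w.length + n) ≤ N + D ∧ OccursAt c.y (w ++ u) i} with hf
  have hfdata : ∀ w ∈ ReturnWordsOf Y u, f w ∈ S ∧ 0 < w.length ∧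
      OccursAt c.y u (f w + w.length) ∧
      (∀ t, 0 < t → t < w.length → ¬ OccursAt c.y u (f w + t)) ∧
      w = factorAt c.y (f w) w.length := by
    intro w hw
    obtain ⟨j, p, hjN, hp0, hpw, hocc1, hocc2, hmidt, hwfac, hlb, hub⟩ := hpair w hw
    have hzlen : (w ++ u).length = p + n := by
      rw [List.length_append, ← hpw, ← hnu]
    have hzj : factorAt c.y j (p + n) = w ++ u := by
      have h := hocc2
      rw [occursAt_iff_factorAt, ← hnu] at h
      rw [factorAt_add, ← hwfac, h]
    have hne : {i | N ≤ i ∧ i + (w.length + n) ≤ N + D ∧ OccursAt c.y (w ++ u) i}.Nonempty := by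
      obtain ⟨i, hi1, hi2, hi3⟩ := h7 (p + n) j N
        (by have hx : (2 * K + 1) * n = 2 * K * n + n := by ring
            omega)
        (le_max_left _ _)
      have hb : K * (p + n + c.r) + (p + n) ≤ D := by
        have c1 : K * (p + n + c.r) ≤ K * (2 * K * n + n + n) :=
          Nat.mul_le_mul_left _ (by omega)
        have c2 : K * (2 * K * n + n + n) + (2 * K * n + n) ≤ (2 * K + 1) ^ 2 * n := by
          nlinarith
        omega
      refine ⟨i, hi1, by rw [← hpw]; omega, ?_⟩
      rw [occursAt_iff_factorAt, hzlen, hi3, hzj]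
    have hmem := Nat.sInf_mem hne
    obtain ⟨hfN, hfD, hfocc⟩ := hmem
    have hagree : ∀ s, s < p + n → c.y (f w + s) = c.y (j + s) := by
      have h1 : factorAt c.y (f w) (p + n) = factorAt c.y j (p + n) := by
        rw [hzj]
        rw [occursAt_iff_factorAt, hzlen] at hfocc
        exact hfocc
      exact factorAt_eq_iff.1 h1
    have hoccu : OccursAt c.y u (f w) := by
      have h := hocc1
      rw [occursAt_iff_factorAt, ← hnu] at h ⊢
      rw [← h]
      exact factorAt_eq_iff.2 (fun t ht => hagree t (by omega))
    have hfD' : f w + (w.length + n) ≤ N + D := hfD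
    refine ⟨⟨hfN, by omega, hoccu⟩, by omega, ?_, ?_, ?_⟩
    · rw [← hpw]
      have h := hocc2
      rw [occursAt_iff_factorAt, ← hnu] at h ⊢
      rw [← h]
      apply factorAt_eq_iff.2
      intro t ht
      have e1 : f w + p + t = f w + (p + t) := by omega
      have e2 : j + p + t = j + (p + t) := by omega
      rw [e1, e2]
      exact hagree (p + t) (by omega)
    · rw [← hpw]
      intro t ht1 ht2 hocct
      apply hmidt t ht1 ht2
      rw [occursAt_iff_factorAt, ← hnu] at hocct ⊢
      rw [← hocct]
      apply factorAt_eq_iff.2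
      intro s hs
      have e1 : f w + t + s = f w + (t + s) := by omega
      have e2 : j + t + s = j + (t + s) := by omega
      rw [e1, e2]
      exact (hagree (t + s) (by omega)).symm
    · rw [← hpw]
      have h1 : factorAt c.y (f w) p = factorAt c.y j p :=
        factorAt_eq_iff.2 (fun t ht => hagree t (by omega))
      rw [h1]
      exact hwfac
  have hfinj : Set.InjOn f (ReturnWordsOf Y u) := by
    intro w₁ hw₁ w₂ hw₂ heq
    obtain ⟨hS₁, hp₁, hocc₁, hmid₁, hfac₁⟩ := hfdata w₁ hw₁
    obtain ⟨hS₂, hp₂, hocc₂, hmid₂, hfac₂⟩ := hfdata w₂ hw₂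
    have hlen : w₁.length = w₂.length := by
      rcases lt_trichotomy w₁.length w₂.length with h | h | h
      · exact absurd (by rw [← heq]; exact hocc₁) (hmid₂ w₁.length hp₁ h)
      · exact h
      · exact absurd (by rw [heq]; exact hocc₂) (hmid₁ w₂.length hp₂ h)
    rw [hfac₁, hfac₂, heq, hlen]
  have himgS : f '' (ReturnWordsOf Y u) ⊆ S := by
    rintro _ ⟨w, hw, rfl⟩
    exact (hfdata w hw).1
  have hRfin : (ReturnWordsOf Y u).Finite :=
    Set.Finite.of_finite_image (hSfin.subset himgS) hfinj
  refine ⟨hRfin, ?_⟩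
  set Q := 2 * K * (2 * K + 1) ^ 2 with hQ
  have e : M' + 2 * K = Q := by
    rw [hM', hQ]
    have h1 : (2 * K + 1) ^ 2 - 1 + 1 = (2 * K + 1) ^ 2 := by
      have : 1 ≤ (2 * K + 1) ^ 2 := Nat.one_le_pow _ _ (by omega)
      omega
    calc 2 * K * ((2 * K + 1) ^ 2 - 1) + 2 * K
        = 2 * K * ((2 * K + 1) ^ 2 - 1 + 1) := (Nat.mul_succ _ _).symm
      _ = 2 * K * (2 * K + 1) ^ 2 := by rw [h1]
  calc (ReturnWordsOf Y u).ncard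
      = (f '' (ReturnWordsOf Y u)).ncard := (Set.ncard_image_of_injOn hfinj).symm
    _ ≤ S.ncard := Set.ncard_le_ncard himgS hSfin
    _ = (g '' S).ncard := (Set.ncard_image_of_injOn hginj).symm
    _ ≤ (Set.Iic M').ncard := Set.ncard_le_ncard
        (by rintro _ ⟨i, hi, rfl⟩; exact himg i hi) (Set.finite_Iic _)
    _ = M' + 1 := by rw [← Finset.coe_Iic, Set.ncard_coe_finset, Nat.card_Iic]
    _ ≤ Q := by omega

end Ctx

section Topo
variable [TopologicalSpace A] [DiscreteTopology A] [TopologicalSpace B] [DiscreteTopology B]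

lemma shift_continuous : Continuous (shift : (ℕ → A) → (ℕ → A)) :=
  continuous_pi fun n => continuous_apply (n + 1)

lemma shift_iterate_mem {X : Set (ℕ → A)} (hinv : ∀ x ∈ X, shift x ∈ X) {x : ℕ → A}
    (hx : x ∈ X) (s : ℕ) : shift^[s] x ∈ X := by
  induction s with
  | zero => exact hx
  | succ s ih => rw [Function.iterate_succ_apply']; exact hinv _ ih

lemma cylinder_isOpen (x : ℕ → A) (l : ℕ) : IsOpen {z : ℕ → A | ∀ i, i < l → z i = x i} := by
  have he : {z : ℕ → A | ∀ i, i < l → z i = x i} = ⋂ i : Fin l, {z : ℕ → A | z i.1 = x i.1} := by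
    ext z
    simp only [Set.mem_setOf_eq, Set.mem_iInter]
    exact ⟨fun h i => h i.1 i.2, fun h i hi => h ⟨i, hi⟩⟩
  rw [he]
  refine isOpen_iInter_of_finite fun i => ?_
  have he2 : {z : ℕ → A | z i.1 = x i.1} = (fun z : ℕ → A => z i.1) ⁻¹' {x i.1} := rfl
  rw [he2]
  exact IsOpen.preimage (continuous_apply i.1) (isOpen_discrete {x i.1})

lemma exists_orbit_approx {X : Set (ℕ → A)} (hX : IsMinimalSubshift X) {x₀ : ℕ → A}
    (hx₀ : x₀ ∈ X) {x : ℕ → A} (hx : x ∈ X) (l : ℕ) :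
    ∃ s, ∀ i, i < l → x i = x₀ (i + s) := by
  set Orb := {z : ℕ → A | ∃ s, z = shift^[s] x₀} with hOrb
  have hOX : Orb ⊆ X := by
    rintro z ⟨s, rfl⟩
    exact shift_iterate_mem hX.1.2 hx₀ s
  have hZX : closure Orb ⊆ X := closure_minimal hOX hX.1.1
  have hZinv : ∀ z ∈ closure Orb, shift z ∈ closure Orb := by
    intro z hz
    have h2 : shift '' closure Orb ⊆ closure (shift '' Orb) :=
      image_closure_subset_closure_image shift_continuous
    have h3 : shift '' Orb ⊆ Orb := by
      rintro _ ⟨w, ⟨s, rfl⟩, rfl⟩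
      exact ⟨s + 1, (Function.iterate_succ_apply' shift s x₀).symm⟩
    exact closure_mono h3 (h2 ⟨z, hz, rfl⟩)
  have hZeq : closure Orb = X := by
    rcases hX.2.2 (closure Orb) hZX isClosed_closure hZinv with h | h
    · exfalso
      have : x₀ ∈ closure Orb := subset_closure ⟨0, rfl⟩
      rw [h] at this
      exact this
    · exact h
  have hxZ : x ∈ closure Orb := hZeq ▸ hx
  obtain ⟨z, hz1, hz2⟩ := mem_closure_iff.1 hxZ _ (cylinder_isOpen x l) (fun i _ => rfl)
  obtain ⟨s, rfl⟩ := hz2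
  exact ⟨s, fun i hi => by rw [← hz1 i hi, shift_iterate_apply]⟩

lemma exists_radius [Finite A] {X : Set (ℕ → A)} (hXc : IsClosed X)
    (φ : (ℕ → A) → (ℕ → B)) (hφ : ContinuousOn φ X) :
    ∃ r, 1 ≤ r ∧ ∀ x ∈ X, ∀ x' ∈ X, (∀ i, i < r → x i = x' i) → φ x 0 = φ x' 0 := by
  classical
  have hXcomp : IsCompact X := hXc.isCompact
  have hloc : ∀ x ∈ X, ∃ rx : ℕ, ∀ z ∈ X, (∀ i, i < rx → z i = x i) → φ z 0 = φ x 0 := by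
    intro x hx
    have hcont : ContinuousWithinAt (fun z => φ z 0) X x :=
      ((continuous_apply 0).comp_continuousOn hφ).continuousWithinAt hx
    have hsing : {φ x 0} ∈ nhds (φ x 0) := (isOpen_discrete {φ x 0}).mem_nhds rfl
    have hpre : (fun z => φ z 0) ⁻¹' {φ x 0} ∈ nhdsWithin x X := hcont hsing
    rw [mem_nhdsWithin] at hpre
    obtain ⟨U, hUopen, hxU, hUsub⟩ := hpre
    obtain ⟨I, uu, hIu, hIsub⟩ := (isOpen_pi_iff.1 hUopen) x hxU
    refine ⟨(I.sup id) + 1, fun z hz hagree => ?_⟩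
    have hzU : z ∈ U := by
      apply hIsub
      intro i hi
      have hile : i < I.sup id + 1 := by
        have hle : i ≤ I.sup id := Finset.le_sup (f := id) hi
        omega
      rw [hagree i hile]
      exact (hIu i hi).2
    have : z ∈ (fun z => φ z 0) ⁻¹' {φ x 0} := hUsub ⟨hzU, hz⟩
    exact this
  choose! rx hrx using hloc
  have hWnhds : ∀ x ∈ X, {z : ℕ → A | ∀ i, i < rx x → z i = x i} ∈ nhds x := fun x _ =>
    (cylinder_isOpen x (rx x)).mem_nhds (fun i _ => rfl)
  obtain ⟨t, htX, hcover⟩ := hXcomp.elim_nhds_subcover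
    (fun x => {z : ℕ → A | ∀ i, i < rx x → z i = x i}) hWnhds
  refine ⟨(t.sup rx) + 1, by omega, fun x hx x' hx' hagree => ?_⟩
  obtain ⟨x₁, hx₁t, hxW⟩ := Set.mem_iUnion₂.1 (hcover hx)
  have hrx₁ : rx x₁ ≤ t.sup rx := Finset.le_sup hx₁t
  have h1 : φ x 0 = φ x₁ 0 := hrx x₁ (htX _ hx₁t) x hx hxW
  have h2 : φ x' 0 = φ x₁ 0 := by
    apply hrx x₁ (htX _ hx₁t) x' hx'
    intro i hi
    rw [← hagree i (by omega)]
    exact hxW i hi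
  rw [h1, h2]

lemma phi_iterate {X : Set (ℕ → A)} (hinv : ∀ x ∈ X, shift x ∈ X)
    (φ : (ℕ → A) → (ℕ → B)) (hequi : ∀ x ∈ X, φ (shift x) = shift (φ x))
    {x : ℕ → A} (hx : x ∈ X) (s : ℕ) : φ (shift^[s] x) = shift^[s] (φ x) := by
  induction s generalizing x with
  | zero => rfl
  | succ s ih =>
    rw [Function.iterate_succ_apply, ih (hinv x hx), hequi x hx,
      ← Function.iterate_succ_apply]

lemma cross {X : Set (ℕ → A)} (hinv : ∀ x ∈ X, shift x ∈ X)
    (φ : (ℕ → A) → (ℕ → B)) (hequi : ∀ x ∈ X, φ (shift x) = shift (φ x))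
    (r : ℕ) (hr0 : ∀ x ∈ X, ∀ x' ∈ X, (∀ i, i < r → x i = x' i) → φ x 0 = φ x' 0)
    {x x' : ℕ → A} (hx : x ∈ X) (hx' : x' ∈ X) (a b n : ℕ)
    (h : ∀ t, t < n + r → x (a + t) = x' (b + t)) :
    ∀ s, s < n → φ x (a + s) = φ x' (b + s) := by
  intro s hs
  have h1 : φ x (a + s) = φ (shift^[a + s] x) 0 := by
    rw [phi_iterate hinv φ hequi hx, shift_iterate_apply, zero_add]
  have h2 : φ x' (b + s) = φ (shift^[b + s] x') 0 := by
    rw [phi_iterate hinv φ hequi hx', shift_iterate_apply, zero_add]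
  rw [h1, h2]
  apply hr0 _ (shift_iterate_mem hinv hx _) _ (shift_iterate_mem hinv hx' _)
  intro i hi
  rw [shift_iterate_apply, shift_iterate_apply]
  have hsi := h (s + i) (by omega)
  have e1 : i + (a + s) = a + (s + i) := by omega
  have e2 : i + (b + s) = b + (s + i) := by omega
  rw [e1, e2]
  exact hsi

end Topo
end LRAux

/-- **Factors of linearly recurrent subshifts.** Let `(X,T)` be a non-periodic linearly
recurrent minimal subshift with constant `K` and `(Y,T)` a non-periodic subshift factor of
`(X,T)`. Then `(Y,T)` is linearly recurrent, and there is `n₁` such that for every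
`u ∈ L(Y)` with `|u| ≥ n₁`: every return word `w ∈ R_u(Y)` satisfies
`|u|/2K ≤ |w| ≤ 2K|u|`, and `#R_u(Y) ≤ 2K(2K+1)²`. -/
theorem factor_of_linearly_recurrent {A B : Type*} [Fintype A] [Fintype B]
    [TopologicalSpace A] [DiscreteTopology A] [TopologicalSpace B] [DiscreteTopology B]
    (X : Set (ℕ → A)) (Y : Set (ℕ → B)) (K : ℕ)
    (hX : IsMinimalSubshift X) (hXnp : ¬ X.Finite)
    (hXLR : ∃ x ∈ X, LinearlyRecurrent x K)
    (hY : IsSubshift Y) (hYnp : ¬ Y.Finite)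
    (hfactor : ∃ φ : (ℕ → A) → (ℕ → B), IsFactorMapOn φ X Y) :
    (∃ K', ∃ y ∈ Y, LinearlyRecurrent y K') ∧
    ∃ n₁ : ℕ, ∀ u ∈ LangOf Y, n₁ ≤ u.length →
      (∀ w ∈ ReturnWordsOf Y u,
        u.length ≤ 2 * K * w.length ∧ w.length ≤ 2 * K * u.length) ∧
      (ReturnWordsOf Y u).Finite ∧
      (ReturnWordsOf Y u).ncard ≤ 2 * K * (2 * K + 1) ^ 2 := by
  classical
  obtain ⟨x₀, hx₀X, hURx, hRBx⟩ := hXLR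
  obtain ⟨φ, hφc, hφim, hφeq⟩ := hfactor
  obtain ⟨r, hr1, hr0⟩ := LRAux.exists_radius hX.1.1 φ hφc
  have hinv := hX.1.2
  have happrox : ∀ z ∈ Y, ∀ i m N, ∃ i', N ≤ i' ∧ ∀ t, t < m → z (i + t) = φ x₀ (i' + t) := by
    intro z hz i m N
    rw [← hφim] at hz
    obtain ⟨x', hx'X, rfl⟩ := hz
    obtain ⟨s, hs⟩ := LRAux.exists_orbit_approx hX hx₀X hx'X (i + (m + r))
    have hfac : IsFactor x₀ (factorAt x₀ (i + s) (m + r)) := LRAux.isFactor_factorAt _ _ _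
    obtain ⟨g, hg0, hgocc⟩ := hURx _ hfac
    obtain ⟨i', hi'1, _, hocc⟩ := hgocc N
    rw [LRAux.occursAt_factorAt_iff] at hocc
    refine ⟨i', hi'1, ?_⟩
    have hagree : ∀ t, t < m + r → x' (i + t) = x₀ (i' + t) := by
      intro t ht
      have e : i + t + s = i + s + t := by omega
      rw [hs (i + t) (by omega), e]
      exact (hocc t ht).symm
    exact LRAux.cross hinv φ hφeq r hr0 hx'X hx₀X i i' m hagree
  have hdeterm : ∀ i i' n, (∀ t, t < n + r → x₀ (i + t) = x₀ (i' + t)) →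
      ∀ t, t < n → φ x₀ (i + t) = φ x₀ (i' + t) :=
    fun i i' n h => LRAux.cross hinv φ hφeq r hr0 hx₀X hx₀X i i' n h
  have hyY : φ x₀ ∈ Y := hφim ▸ Set.mem_image_of_mem φ hx₀X
  set c : LRAux.Ctx A B Y K :=
    ⟨x₀, φ x₀, r, hr1, hURx, hRBx, hdeterm, hyY, happrox, hYnp⟩ with hc
  constructor
  · obtain ⟨K', hK'⟩ := c.exists_LR
    exact ⟨K', c.y, c.hyY, hK'⟩
  · exact c.main_bounds
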